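/- Fix integers k, n with 2 ≤ k < n. Let C be a partial (k,n)-Steiner system every finite subset of which is open, let A ⊆ C be such that A ≤_o C, and let c ∈ C ∖ A be such that either c is a point incident with exactly one block of A, or c is a block incident with exactly k points of A. Then A ∪ {c} ≤_o C. -/

import Mathlib

namespace Steiner

variable {P L : Type}

/-- The blocks of `X` incident with the point `p`. -/
def blocksIn (I : P → L → Prop) (X : Set (P ⊕ L)) (p : P) : Set L :=
  {b : L | Sum.inr b ∈ X ∧ I p b}

/-- The points of `X` incident with the block `b`. -/
def pointsIn (I : P → L → Prop) (X : Set (P ⊕ L)) (b : L) : Set P :=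
  {p : P | Sum.inl p ∈ X ∧ I p b}

/-- An element is hyperfree in `X` if it is a point incident with at most one block of `X`,
or a block incident with at most `k` points of `X`. -/
def Hyperfree (k : ℕ) (I : P → L → Prop) (X : Set (P ⊕ L)) : (P ⊕ L) → Prop
  | Sum.inl p => (blocksIn I X p).encard ≤ 1
  | Sum.inr b => (pointsIn I X b).encard ≤ k

/-- `B` is open over `A`: every nonempty finite subset `C` of `B \ A` contains an element
that is hyperfree in `A ∪ C`. -/
def OpenOver (k : ℕ) (I : P → L → Prop) (A B : Set (P ⊕ L)) : Prop :=
  ∀ C : Set (P ⊕ L), C ⊆ B \ A → C.Finite → C.Nonempty →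
    ∃ c ∈ C, Hyperfree k I (A ∪ C) c

/-- `B` is open: every nonempty finite subset `C` of `B` contains an element hyperfree in `C`. -/
def IsOpen (k : ℕ) (I : P → L → Prop) (B : Set (P ⊕ L)) : Prop :=
  ∀ C : Set (P ⊕ L), C ⊆ B → C.Finite → C.Nonempty →
    ∃ c ∈ C, Hyperfree k I C c

/-- `X` with the incidence relation `I` is a partial `(k,n)`-Steiner system: any `k` distinct
points of `X` are incident with at most one common block of `X`, and every block of `X` is
incident with at most `n` points of `X`. -/
def IsPartial (k n : ℕ) (I : P → L → Prop) (X : Set (P ⊕ L)) : Prop :=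
  (∀ S : Set P, (∀ p ∈ S, Sum.inl p ∈ X) → S.encard = k →
    ∀ b b' : L, Sum.inr b ∈ X → Sum.inr b' ∈ X →
      (∀ p ∈ S, I p b) → (∀ p ∈ S, I p b') → b = b') ∧
  (∀ b : L, Sum.inr b ∈ X → (pointsIn I X b).encard ≤ n)

end Steiner

namespace Steiner

lemma blocksIn_mono' {P L : Type} {I : P → L → Prop} {X Y : Set (P ⊕ L)} (h : X ⊆ Y) (p : P) :
    blocksIn I X p ⊆ blocksIn I Y p := fun b hb => ⟨h hb.1, hb.2⟩

lemma pointsIn_mono' {P L : Type} {I : P → L → Prop} {X Y : Set (P ⊕ L)} (h : X ⊆ Y) (b : L) :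
    pointsIn I X b ⊆ pointsIn I Y b := fun p hp => ⟨h hp.1, hp.2⟩

lemma blocksIn_union_inl {P L : Type} (I : P → L → Prop) (X : Set (P ⊕ L)) (q p : P) :
    blocksIn I (X ∪ {Sum.inl q}) p = blocksIn I X p := by
  ext b; simp [blocksIn]

lemma pointsIn_union_inr {P L : Type} (I : P → L → Prop) (X : Set (P ⊕ L)) (b' b : L) :
    pointsIn I (X ∪ {Sum.inr b'}) b = pointsIn I X b := by
  ext p; simp [pointsIn]

end Steiner

open Steiner

theorem stmt6 {P L : Type} (k n : ℕ) (hk : 2 ≤ k) (hkn : k < n)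
    (I : P → L → Prop)
    (hpartial : IsPartial k n I (Set.univ : Set (P ⊕ L)))
    (hopen : IsOpen k I (Set.univ : Set (P ⊕ L)))
    (A : Set (P ⊕ L)) (hA : OpenOver k I A Set.univ)
    (c : P ⊕ L) (hc : c ∉ A)
    (hcase :
      (∃ p : P, c = Sum.inl p ∧ (blocksIn I A p).encard = 1) ∨
      (∃ b : L, c = Sum.inr b ∧ (pointsIn I A b).encard = k)) :
    OpenOver k I (A ∪ {c}) Set.univ := by
  intro C hC hCfin hCne
  have hCA : C ⊆ Set.univ \ A := fun x hx => ⟨trivial, fun hxA => (hC hx).2 (Or.inl hxA)⟩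
  have hcC : c ∉ C := fun h => (hC h).2 (Or.inr rfl)
  obtain ⟨d, hd, hdfree⟩ := hA (C ∪ {c})
    (by
      intro x hx
      rcases hx with hx | hx
      · exact hCA hx
      · exact ⟨trivial, by rw [Set.mem_singleton_iff.1 hx]; exact hc⟩)
    (hCfin.union (Set.finite_singleton c)) ⟨c, Or.inr rfl⟩
  have hset : A ∪ (C ∪ {c}) = (A ∪ {c}) ∪ C := by
    ext x; simp [Set.mem_union, or_comm, or_assoc, or_left_comm]
  rcases hd with hdC | hdc
  · exact ⟨d, hdC, by rwa [hset] at hdfree⟩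
  · have hdc' : d = c := hdc
    subst hdc'
    obtain ⟨d', hd', hfree'⟩ := hA C hCA hCfin hCne
    refine ⟨d', hd', ?_⟩
    have hset2 : (A ∪ {d}) ∪ C = (A ∪ C) ∪ {d} := by
      ext x; simp [Set.mem_union, or_comm, or_assoc, or_left_comm]
    rw [hset2]
    rcases hcase with ⟨p, hcp, hp1⟩ | ⟨b, hcb, hbk⟩
    · subst hcp
      have hdfree' : (blocksIn I (A ∪ (C ∪ {Sum.inl p})) p).encard ≤ 1 := hdfree
      have heq : blocksIn I (A ∪ (C ∪ {Sum.inl p})) p = blocksIn I A p := by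
        refine ((Set.finite_of_encard_eq_coe (k := 1) (by exact_mod_cast hp1)).eq_of_subset_of_encard_le
          (blocksIn_mono' Set.subset_union_left p) ?_).symm
        rw [hp1]; exact_mod_cast hdfree'
      cases d' with
      | inl q =>
        show (blocksIn I ((A ∪ C) ∪ {Sum.inl p}) q).encard ≤ 1
        rw [blocksIn_union_inl]
        exact hfree'
      | inr b' =>
        show (pointsIn I ((A ∪ C) ∪ {Sum.inl p}) b').encard ≤ k
        have hnb : ¬ I p b' := by
          intro hI
          have : b' ∈ blocksIn I (A ∪ (C ∪ {Sum.inl p})) p :=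
            ⟨Or.inr (Or.inl hd'), hI⟩
          rw [heq] at this
          exact (hCA hd').2 this.1
        have : pointsIn I ((A ∪ C) ∪ {Sum.inl p}) b' = pointsIn I (A ∪ C) b' := by
          ext q
          constructor
          · rintro ⟨hq | hq, hI⟩
            · exact ⟨hq, hI⟩
            · exact absurd (Sum.inl.inj (Set.mem_singleton_iff.1 hq) ▸ hI) hnb
          · rintro ⟨hq, hI⟩; exact ⟨Or.inl hq, hI⟩
        rw [this]
        exact hfree'
    · subst hcb
      have hdfree' : (pointsIn I (A ∪ (C ∪ {Sum.inr b})) b).encard ≤ k := hdfree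
      have heq : pointsIn I (A ∪ (C ∪ {Sum.inr b})) b = pointsIn I A b := by
        refine ((Set.finite_of_encard_eq_coe hbk).eq_of_subset_of_encard_le
          (pointsIn_mono' Set.subset_union_left b) ?_).symm
        rw [hbk]; exact hdfree'
      cases d' with
      | inr b' =>
        show (pointsIn I ((A ∪ C) ∪ {Sum.inr b}) b').encard ≤ k
        rw [pointsIn_union_inr]
        exact hfree'
      | inl q =>
        show (blocksIn I ((A ∪ C) ∪ {Sum.inr b}) q).encard ≤ 1
        have hnb : ¬ I q b := by
          intro hI
          have : q ∈ pointsIn I (A ∪ (C ∪ {Sum.inr b})) b :=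
            ⟨Or.inr (Or.inl hd'), hI⟩
          rw [heq] at this
          exact (hCA hd').2 this.1
        have : blocksIn I ((A ∪ C) ∪ {Sum.inr b}) q = blocksIn I (A ∪ C) q := by
          ext b'
          constructor
          · rintro ⟨hq | hq, hI⟩
            · exact ⟨hq, hI⟩
            · exact absurd (Sum.inr.inj (Set.mem_singleton_iff.1 hq) ▸ hI) hnb
          · rintro ⟨hq, hI⟩; exact ⟨Or.inl hq, hI⟩
        rw [this]
        exact hfree'
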